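/- For γ > 0 and λ₁, λ₂ the positive constants from the characteristic roots of γλ⁴ - λ² - 1, the function f(δ) = λ₂ tan(λ₂ δ) + λ₁ tanh(λ₁ δ) has a unique zero δ^γ in the interval (π/(2λ₂), π/λ₂). -/

import Mathlib

open Real Set Filter Topology

private lemma tanh_strictMono : StrictMono Real.tanh := by
  intro x y h
  rw [Real.tanh_eq_sinh_div_cosh, Real.tanh_eq_sinh_div_cosh,
    div_lt_div_iff₀ (Real.cosh_pos x) (Real.cosh_pos y)]
  have h1 : 0 < Real.sinh (y - x) := by
    rwa [Real.sinh_pos_iff, sub_pos]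
  rw [Real.sinh_sub] at h1
  linarith

private lemma tanh_le_one (x : ℝ) : Real.tanh x ≤ 1 := by
  rw [Real.tanh_eq_sinh_div_cosh, div_le_one (Real.cosh_pos x)]
  nlinarith [Real.sinh_sub_cosh x, Real.exp_pos (-x)]

private lemma tendsto_tan_pi_div_two_right :
    Tendsto Real.tan (𝓝[>] (Real.pi / 2)) atBot := by
  have h1 : Tendsto (fun x : ℝ => x - Real.pi) (𝓝[>] (Real.pi / 2))
      (𝓝[>] (-(Real.pi / 2))) := by
    apply tendsto_nhdsWithin_of_tendsto_nhds_of_eventually_within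
    · have heq : Real.pi / 2 - Real.pi = -(Real.pi / 2) := by ring
      have hct : Tendsto (fun x : ℝ => x - Real.pi) (𝓝 (Real.pi / 2))
          (𝓝 (Real.pi / 2 - Real.pi)) := (continuous_id.sub continuous_const).tendsto _
      rw [heq] at hct
      exact hct.mono_left nhdsWithin_le_nhds
    · filter_upwards [self_mem_nhdsWithin] with x hx
      simp only [mem_Ioi] at hx ⊢
      linarith
  have := Real.tendsto_tan_neg_pi_div_two.comp h1
  refine this.congr fun x => ?_
  exact Real.tan_sub_pi x

private lemma continuous_tanh' : Continuous Real.tanh := by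
  have h : Real.tanh = fun x => Real.sinh x / Real.cosh x :=
    funext Real.tanh_eq_sinh_div_cosh
  rw [h]
  exact Real.continuous_sinh.div Real.continuous_cosh fun x => (Real.cosh_pos x).ne'

theorem stmt4 (γ : ℝ) (hγ : 0 < γ)
    (l1 l2 : ℝ)
    (hl1 : l1 = Real.sqrt ((1 + Real.sqrt (1 + 4 * γ)) / (2 * γ)))
    (hl2 : l2 = Real.sqrt ((Real.sqrt (1 + 4 * γ) - 1) / (2 * γ))) :
    ∃! δ : ℝ, δ ∈ Set.Ioo (Real.pi / (2 * l2)) (Real.pi / l2) ∧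
      l2 * Real.tan (l2 * δ) + l1 * Real.tanh (l1 * δ) = 0 := by
  have hs : 1 < Real.sqrt (1 + 4 * γ) := by
    have : (1 : ℝ) < 1 + 4 * γ := by linarith
    nlinarith [Real.sq_sqrt (by linarith : (0:ℝ) ≤ 1 + 4 * γ),
      Real.sqrt_nonneg (1 + 4 * γ)]
  have hl2pos : 0 < l2 := by
    rw [hl2, Real.sqrt_pos]
    have h : (0:ℝ) < Real.sqrt (1 + 4 * γ) - 1 := by linarith
    positivity
  have hl1pos : 0 < l1 := by
    rw [hl1, Real.sqrt_pos]
    have : (0:ℝ) < 1 + Real.sqrt (1 + 4 * γ) := by linarith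
    positivity
  have hπ := Real.pi_pos
  set a := Real.pi / (2 * l2) with ha
  set b := Real.pi / l2 with hb
  have hab : a < b := by
    rw [ha, hb, div_lt_div_iff₀ (by positivity) hl2pos]
    nlinarith
  set g : ℝ → ℝ := fun δ => l2 * Real.tan (l2 * δ) + l1 * Real.tanh (l1 * δ)
    with hg
  -- membership translation
  have hmem : ∀ x ∈ Ioo a b, l2 * x ∈ Ioo (Real.pi / 2) Real.pi := by
    rintro x ⟨hx1, hx2⟩
    constructor
    · rw [ha, div_lt_iff₀ (by positivity)] at hx1
      linarith
    · rw [hb, lt_div_iff₀ hl2pos] at hx2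
      linarith
  -- strict monotonicity on Ioo a b
  have hmono : StrictMonoOn g (Ioo a b) := by
    intro x hx y hy hxy
    have hx' := hmem x hx
    have hy' := hmem y hy
    have htan : Real.tan (l2 * x) < Real.tan (l2 * y) := by
      rw [← Real.tan_sub_pi (l2 * x), ← Real.tan_sub_pi (l2 * y)]
      apply Real.strictMonoOn_tan
      · constructor <;> [skip; skip] <;> simp only [mem_Ioo] at hx' ⊢ <;>
          [linarith [hx'.1]; linarith [hx'.2]]
      · constructor <;> simp only [mem_Ioo] at hy' ⊢ <;>
          [linarith [hy'.1]; linarith [hy'.2]]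
      · have : l2 * x < l2 * y := by nlinarith
        linarith
    have htanh : Real.tanh (l1 * x) < Real.tanh (l1 * y) :=
      tanh_strictMono (by nlinarith)
    simp only [hg]
    nlinarith
  -- continuity on Ioc a b
  have hcont : ContinuousOn g (Ioc a b) := by
    apply continuousOn_of_forall_continuousAt
    intro x hx
    have hx' : l2 * x ∈ Ioc (Real.pi / 2) Real.pi := by
      obtain ⟨hx1, hx2⟩ := hx
      constructor
      · rw [ha, div_lt_iff₀ (by positivity)] at hx1; linarith
      · rw [hb, le_div_iff₀ hl2pos] at hx2; linarith
    have hcos : Real.cos (l2 * x) ≠ 0 := by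
      have : Real.cos (l2 * x) < 0 :=
        Real.cos_neg_of_pi_div_two_lt_of_lt hx'.1 (by linarith [hx'.2])
      linarith
    have h1 : ContinuousAt (fun x => Real.tan (l2 * x)) x :=
      (Real.continuousAt_tan.mpr hcos).comp
        ((continuous_const.mul continuous_id).continuousAt)
    have h2 : ContinuousAt (fun x => Real.tanh (l1 * x)) x :=
      (continuous_tanh'.comp (continuous_const.mul continuous_id)).continuousAt
    exact (continuousAt_const.mul h1).add (continuousAt_const.mul h2)
  -- g b > 0
  have hgb : 0 < g b := by
    have h1 : l2 * b = Real.pi := by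
      rw [hb]; field_simp
    have h2 : 0 < Real.tanh (l1 * b) := by
      have := tanh_strictMono (show (0:ℝ) < l1 * b by
        rw [hb]; positivity)
      rwa [Real.tanh_zero] at this
    simp only [hg, h1, Real.tan_pi, mul_zero, zero_add]
    positivity
  -- g tends to -∞ at a from the right
  have hbot : Tendsto g (𝓝[>] a) atBot := by
    have hmap : Tendsto (fun δ => l2 * δ) (𝓝[>] a) (𝓝[>] (Real.pi / 2)) := by
      apply tendsto_nhdsWithin_of_tendsto_nhds_of_eventually_within
      · have h1 : l2 * a = Real.pi / 2 := by
          rw [ha]; field_simp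
        have hct : Tendsto (fun δ : ℝ => l2 * δ) (𝓝 a) (𝓝 (l2 * a)) :=
          (continuous_const.mul continuous_id).tendsto _
        rw [h1] at hct
        exact hct.mono_left nhdsWithin_le_nhds
      · filter_upwards [self_mem_nhdsWithin] with x hx
        simp only [mem_Ioi] at hx ⊢
        have h1 : l2 * a = Real.pi / 2 := by
          rw [ha]; field_simp
        nlinarith
    have h1 : Tendsto (fun δ => l2 * Real.tan (l2 * δ)) (𝓝[>] a) atBot := by
      exact (tendsto_tan_pi_div_two_right.comp hmap).const_mul_atBot hl2pos
    apply Filter.tendsto_atBot_add_right_of_ge _ l1 h1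
    intro x
    nlinarith [tanh_le_one (l1 * x)]
  -- find c ∈ Ioo a b with g c < 0
  obtain ⟨c, hgc, hc⟩ : ∃ c, g c < 0 ∧ c ∈ Ioo a b := by
    have h1 : ∀ᶠ x in 𝓝[>] a, g x < 0 := hbot.eventually (eventually_lt_atBot 0)
    have h2 : Ioo a b ∈ 𝓝[>] a := Ioo_mem_nhdsGT_of_mem ⟨le_refl a, hab⟩
    exact (h1.and (eventually_of_mem h2 fun x hx => hx)).exists
  -- IVT on [c, b]
  have hsub : Icc c b ⊆ Ioc a b := fun x hx => ⟨lt_of_lt_of_le hc.1 hx.1, hx.2⟩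
  have hivt := intermediate_value_Ioo (le_of_lt hc.2) (hcont.mono hsub)
  have h0 : (0:ℝ) ∈ Ioo (g c) (g b) := ⟨hgc, hgb⟩
  obtain ⟨δ, hδmem, hδ0⟩ := hivt h0
  have hδab : δ ∈ Ioo a b := ⟨lt_trans hc.1 hδmem.1, hδmem.2⟩
  refine ⟨δ, ⟨hδab, hδ0⟩, ?_⟩
  rintro δ' ⟨hδ'ab, hδ'0⟩
  exact hmono.injOn hδ'ab hδab (by rw [hδ0]; exact hδ'0)
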